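/- arXiv:2107.00527 — 4 statements merged into one kernel-verified Lean document; each statement's English description precedes it below -/
import Mathlib

section
/- Let R_1, …, R_{n+1} be exchangeable real-valued random variables. For a significance level α ∈ (0,1), define δ = (1 + |{i ∈ {1,…,n} : R_i ≥ R_{n+1}}|)/(n+1). Then P(δ > α) ≥ 1 − α. -/
open MeasureTheory Finset ENNReal

namespace ConformalAux

noncomputable def cnt (n : ℕ) (j : Fin (n+1)) (x : Fin (n+1) → ℝ) : ℕ :=
  (Finset.univ.filter (fun i => x j ≤ x i)).card

lemma cnt_eq_sum (n : ℕ) (j : Fin (n+1)) (x : Fin (n+1) → ℝ) :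
    cnt n j x = ∑ i, if x j ≤ x i then 1 else 0 :=
  Finset.card_filter _ _

lemma cnt_comp (n : ℕ) (σ : Equiv.Perm (Fin (n+1))) (j : Fin (n+1)) (x : Fin (n+1) → ℝ) :
    cnt n j (x ∘ σ) = cnt n (σ j) x := by
  simp only [cnt_eq_sum, Function.comp]
  exact Equiv.sum_comp σ (fun i => if x (σ j) ≤ x i then (1:ℕ) else 0)

lemma measurable_cnt (n : ℕ) (j : Fin (n+1)) :
    Measurable fun x : Fin (n+1) → ℝ => cnt n j x := by
  simp only [cnt_eq_sum]
  refine Finset.measurable_sum _ fun i _ => ?_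
  exact Measurable.ite (measurableSet_le (measurable_pi_apply j) (measurable_pi_apply i))
    measurable_const measurable_const

lemma filter_cnt_card_le (n : ℕ) (k : ℕ) (x : Fin (n+1) → ℝ) :
    (Finset.univ.filter fun j : Fin (n+1) => cnt n j x ≤ k).card ≤ k := by
  rcases (Finset.univ.filter fun j : Fin (n+1) => cnt n j x ≤ k).eq_empty_or_nonempty with h | h
  · simp [h]
  · obtain ⟨j0, hj0, hmin⟩ := Finset.exists_min_image _ x h
    have hj0' : cnt n j0 x ≤ k := (Finset.mem_filter.mp hj0).2
    refine le_trans (le_trans (Finset.card_le_card ?_) le_rfl) hj0'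
    intro j hj
    simp only [Finset.mem_filter, Finset.mem_univ, true_and]
    exact hmin j hj

lemma cnt_last (n : ℕ) (x : Fin (n+1) → ℝ) :
    cnt n (Fin.last n) x
      = (Finset.univ.filter fun i : Fin n => x (Fin.last n) ≤ x i.castSucc).card + 1 := by
  rw [cnt_eq_sum, Fin.sum_univ_castSucc, Finset.card_filter]
  simp

end ConformalAux

/-- Finite-sample validity of split conformal prediction: for exchangeable
nonconformity scores `R_1,…,R_{n+1}`, the conformal p-value
`δ = (1 + #{i ≤ n : R_i ≥ R_{n+1}})/(n+1)` satisfies `P(δ > α) ≥ 1 − α`. -/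
theorem stmt3 {Ω : Type*} [MeasurableSpace Ω] (P : Measure Ω) [IsProbabilityMeasure P]
    (n : ℕ) (R : Fin (n + 1) → Ω → ℝ) (hmeas : ∀ i, Measurable (R i))
    (hexch : ∀ σ : Equiv.Perm (Fin (n + 1)),
      P.map (fun ω i => R (σ i) ω) = P.map (fun ω i => R i ω))
    (α : ℝ) (hα : α ∈ Set.Ioo (0 : ℝ) 1) :
    ENNReal.ofReal (1 - α) ≤
      P {ω | α < (1 + ((Finset.univ.filter
        (fun i : Fin n => R (Fin.last n) ω ≤ R i.castSucc ω)).card : ℝ)) / (n + 1)} := by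
  obtain ⟨hα0, hα1⟩ := hα
  set f : Ω → (Fin (n+1) → ℝ) := fun ω i => R i ω with hf
  have hfm : Measurable f := measurable_pi_lambda _ hmeas
  set k : ℕ := ⌊α * (n+1)⌋₊ with hk
  set A : Fin (n+1) → Set (Fin (n+1) → ℝ) := fun j => {x | ConformalAux.cnt n j x ≤ k} with hA
  have hAm : ∀ j, MeasurableSet (A j) := fun j =>
    measurableSet_le (ConformalAux.measurable_cnt n j) measurable_const
  -- Step B: exchangeability gives equal probabilities
  have hBmap : ∀ j, P (f ⁻¹' A j) = P (f ⁻¹' A (Fin.last n)) := by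
    intro j
    set σ : Equiv.Perm (Fin (n+1)) := Equiv.swap (Fin.last n) j with hσdef
    have hσ : P.map (fun ω i => R (σ i) ω) = P.map f := hexch σ
    have hcomp : (fun ω i => R (σ i) ω) = (fun x : Fin (n+1) → ℝ => x ∘ σ) ∘ f := rfl
    have hgm : Measurable (fun x : Fin (n+1) → ℝ => x ∘ σ) :=
      measurable_pi_lambda _ (fun i => measurable_pi_apply (σ i))
    have hset : (fun x : Fin (n+1) → ℝ => x ∘ σ) ∘ f ⁻¹' A (Fin.last n) = f ⁻¹' A j := by
      ext ω
      simp only [Set.mem_preimage, hA, Set.mem_setOf_eq, Function.comp_apply]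
      rw [ConformalAux.cnt_comp, hσdef, Equiv.swap_apply_left]
    calc P (f ⁻¹' A j)
        = P ((fun x : Fin (n+1) → ℝ => x ∘ σ) ∘ f ⁻¹' A (Fin.last n)) := by rw [hset]
      _ = P.map ((fun x : Fin (n+1) → ℝ => x ∘ σ) ∘ f) (A (Fin.last n)) :=
          (Measure.map_apply (hgm.comp hfm) (hAm _)).symm
      _ = P.map f (A (Fin.last n)) := by rw [← hcomp, hσ]
      _ = P (f ⁻¹' A (Fin.last n)) := Measure.map_apply hfm (hAm _)
  -- Step C: union bound via counting
  have hsum : ((n:ℝ≥0∞)+1) * P (f ⁻¹' A (Fin.last n)) ≤ k := by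
    have hsc : ∑ j : Fin (n+1), P (f ⁻¹' A j) = ((n:ℝ≥0∞)+1) * P (f ⁻¹' A (Fin.last n)) := by
      rw [Finset.sum_congr rfl (fun j _ => hBmap j), Finset.sum_const, Finset.card_univ,
        Fintype.card_fin, nsmul_eq_mul]
      push_cast
      ring
    rw [← hsc]
    calc ∑ j : Fin (n+1), P (f ⁻¹' A j)
        = ∑ j : Fin (n+1), ∫⁻ ω, (f ⁻¹' A j).indicator (1 : Ω → ℝ≥0∞) ω ∂P := by
          refine Finset.sum_congr rfl fun j _ => ?_
          exact (lintegral_indicator_one (hfm (hAm j))).symm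
      _ = ∫⁻ ω, ∑ j : Fin (n+1), (f ⁻¹' A j).indicator (1 : Ω → ℝ≥0∞) ω ∂P :=
          (lintegral_finset_sum _ (fun j _ => measurable_const.indicator (hfm (hAm j)))).symm
      _ ≤ ∫⁻ _a, (k : ℝ≥0∞) ∂P := by
          refine lintegral_mono fun ω => ?_
          have hpt : ∑ j : Fin (n+1), (f ⁻¹' A j).indicator (1 : Ω → ℝ≥0∞) ω
              = ((Finset.univ.filter fun j : Fin (n+1) =>
                  ConformalAux.cnt n j (f ω) ≤ k).card : ℝ≥0∞) := by
            rw [Finset.card_filter, Nat.cast_sum]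
            refine Finset.sum_congr rfl fun j _ => ?_
            by_cases hcase : ConformalAux.cnt n j (f ω) ≤ k
            · simp [Set.indicator_apply, hA, Set.mem_preimage, hcase]
            · simp [Set.indicator_apply, hA, Set.mem_preimage, hcase]
          rw [hpt]
          exact (Nat.cast_le (α := ℝ≥0∞)).mpr (ConformalAux.filter_cnt_card_le n k (f ω))
      _ = (k:ℝ≥0∞) := by simp
  -- identify the complement of the event
  set E : Set Ω := {ω | α < (1 + ((Finset.univ.filter
      (fun i : Fin n => R (Fin.last n) ω ≤ R i.castSucc ω)).card : ℝ)) / (n + 1)} with hE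
  have hnpos : (0:ℝ) < (n:ℝ) + 1 := by positivity
  have hEc : f ⁻¹' A (Fin.last n) = Eᶜ := by
    ext ω
    simp only [Set.mem_preimage, hA, Set.mem_setOf_eq, Set.mem_compl_iff, hE, not_lt]
    rw [ConformalAux.cnt_last]
    have hcnt : (f ω) (Fin.last n) = R (Fin.last n) ω := rfl
    constructor
    · intro h
      have h' : (((Finset.univ.filter fun i : Fin n =>
          (f ω) (Fin.last n) ≤ (f ω) i.castSucc).card : ℝ) + 1) ≤ α * ((n:ℝ)+1) := by
        have := (Nat.le_floor_iff (by positivity)).mp h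
        push_cast at this ⊢
        linarith
      rw [div_le_iff₀ hnpos]
      simp only [hf] at h'
      linarith
    · intro h
      rw [div_le_iff₀ hnpos] at h
      rw [Nat.le_floor_iff (by positivity)]
      push_cast
      simp only [hf]
      linarith
  have hPEc : P Eᶜ ≤ ENNReal.ofReal α := by
    rw [← hEc]
    have h1 : P (f ⁻¹' A (Fin.last n)) ≤ (k : ℝ≥0∞) / ((n:ℝ≥0∞)+1) := by
      rw [ENNReal.le_div_iff_mul_le (by simp) (by simp), mul_comm]
      exact hsum
    refine h1.trans ?_
    have e1 : (k : ℝ≥0∞) / ((n:ℝ≥0∞)+1) = ENNReal.ofReal ((k:ℝ) / ((n:ℝ)+1)) := by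
      rw [ENNReal.ofReal_div_of_pos hnpos]
      congr 1
      · simp [ENNReal.ofReal_natCast]
      · rw [ENNReal.ofReal_add (by positivity) zero_le_one]
        simp [ENNReal.ofReal_natCast]
    rw [e1]
    apply ENNReal.ofReal_le_ofReal
    rw [div_le_iff₀ hnpos]
    calc (k:ℝ) ≤ α * ((n:ℝ)+1) := Nat.floor_le (by positivity)
      _ = α * ((n:ℝ)+1) := rfl
  have hone : (1:ℝ≥0∞) ≤ P E + P Eᶜ := by
    have := measure_union_le (μ := P) E Eᶜ
    rwa [Set.union_compl_self, measure_univ] at this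
  calc ENNReal.ofReal (1 - α) = 1 - ENNReal.ofReal α := by
        rw [ENNReal.ofReal_sub _ hα0.le, ENNReal.ofReal_one]
    _ ≤ 1 - P Eᶜ := tsub_le_tsub_left hPEc 1
    _ ≤ P E := tsub_le_iff_right.mpr hone
end

section
/- Let R_1, …, R_{n+1} be exchangeable real-valued random variables with a continuous joint distribution (so ties have probability zero). For α ∈ (0,1), define δ = (1 + |{i ∈ {1,…,n} : R_i ≥ R_{n+1}}|)/(n+1). Then P(δ > α) = 1 − ⌊α(n+1)⌋/(n+1). -/
open MeasureTheory Finset ENNReal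

/-- Count of indices `i ≠ t` with `v t ≤ v i`. -/
noncomputable def cnt' {n : ℕ} (t : Fin (n + 1)) (v : Fin (n + 1) → ℝ) : ℕ :=
  (Finset.univ.filter (fun i => i ≠ t ∧ v t ≤ v i)).card

lemma cnt'_le {n : ℕ} (t : Fin (n + 1)) (v : Fin (n + 1) → ℝ) : cnt' t v ≤ n := by
  have h : (Finset.univ.filter (fun i => i ≠ t ∧ v t ≤ v i)) ⊆ Finset.univ.erase t :=
    fun i hi => by simp only [mem_filter] at hi; exact Finset.mem_erase.2 ⟨hi.2.1, Finset.mem_univ i⟩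
  calc cnt' t v ≤ (Finset.univ.erase t).card := Finset.card_le_card h
    _ = n := by simp [Finset.card_erase_of_mem]

lemma cnt'_comp_swap {n : ℕ} (t : Fin (n + 1)) (v : Fin (n + 1) → ℝ) :
    cnt' t (fun i => v (Equiv.swap t (Fin.last n) i)) = cnt' (Fin.last n) v := by
  set σ := Equiv.swap t (Fin.last n) with hσ
  have hσt : σ t = Fin.last n := Equiv.swap_apply_left _ _
  have hσl : σ (Fin.last n) = t := Equiv.swap_apply_right _ _
  have hσσ : ∀ i, σ (σ i) = i := Equiv.swap_apply_self _ _
  unfold cnt'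
  apply Finset.card_nbij' (i := fun i => σ i) (j := fun i => σ i)
  · intro i hi
    simp only [Finset.mem_coe, mem_filter, mem_univ, true_and, hσt] at hi ⊢
    refine ⟨?_, hi.2⟩
    rw [← hσt]
    exact fun h => hi.1 (σ.injective h)
  · intro i hi
    simp only [Finset.mem_coe, mem_filter, mem_univ, true_and, hσt] at hi ⊢
    refine ⟨?_, by rw [hσσ]; exact hi.2⟩
    rw [← hσl]
    exact fun h => hi.1 (σ.injective h)
  · intro i _; simp [hσσ]
  · intro i _; simp [hσσ]

lemma cnt'_lt_cnt' {n : ℕ} {v : Fin (n + 1) → ℝ}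
    {s t : Fin (n + 1)} (hst : v t < v s) : cnt' s v < cnt' t v := by
  unfold cnt'
  apply Finset.card_lt_card
  rw [Finset.ssubset_iff_of_subset]
  · refine ⟨s, ?_, ?_⟩
    · simp only [mem_filter, mem_univ, true_and]
      exact ⟨fun h => absurd (h ▸ hst) (lt_irrefl _), le_of_lt hst⟩
    · simp only [mem_filter, mem_univ, true_and, not_and]
      intro h; exact absurd rfl h
  · intro i hi
    simp only [mem_filter, mem_univ, true_and] at hi ⊢
    have h1 : v t < v i := lt_of_lt_of_le hst hi.2
    exact ⟨fun h => absurd (h ▸ h1) (lt_irrefl _), le_of_lt h1⟩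

lemma cnt'_injective {n : ℕ} {v : Fin (n + 1) → ℝ} (hv : Function.Injective v) :
    Function.Injective (fun t => cnt' t v) := by
  intro s t h
  by_contra hne
  rcases lt_trichotomy (v s) (v t) with hlt | heq | hlt
  · exact absurd h (by simp only; exact (cnt'_lt_cnt' hlt).ne')
  · exact hne (hv heq)
  · exact absurd h (by simp only; exact (cnt'_lt_cnt' hlt).ne)

lemma cnt'_existsUnique {n : ℕ} {v : Fin (n + 1) → ℝ} (hv : Function.Injective v)
    (j : ℕ) (hj : j ≤ n) : ∃! t, cnt' t v = j := by
  have hf : Function.Injective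
      (fun t : Fin (n + 1) => (⟨cnt' t v, Nat.lt_succ_of_le (cnt'_le t v)⟩ : Fin (n + 1))) := by
    intro s t h
    exact cnt'_injective hv (by simpa [Fin.ext_iff] using h)
  obtain ⟨t, ht⟩ := Finite.surjective_of_injective hf ⟨j, Nat.lt_succ_of_le hj⟩
  have htj : cnt' t v = j := by simpa [Fin.ext_iff] using ht
  exact ⟨t, htj, fun s hs => cnt'_injective hv (by simp only [hs, htj])⟩

lemma measurable_cnt' {n : ℕ} (t : Fin (n + 1)) : Measurable (cnt' t) := by
  unfold cnt'
  simp_rw [Finset.card_filter]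
  apply Finset.measurable_sum
  intro i _
  apply Measurable.ite _ measurable_const measurable_const
  exact MeasurableSet.inter (MeasurableSet.const _)
    (measurableSet_le (measurable_pi_apply t) (measurable_pi_apply i))

lemma cnt'_last {n : ℕ} (v : Fin (n + 1) → ℝ) :
    (Finset.univ.filter (fun i : Fin n => v (Fin.last n) ≤ v i.castSucc)).card
      = cnt' (Fin.last n) v := by
  unfold cnt'
  apply Finset.card_bij (i := fun a _ => a.castSucc)
  · intro a ha
    simp only [mem_filter, mem_univ, true_and] at ha ⊢
    exact ⟨(Fin.castSucc_lt_last a).ne, ha⟩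
  · intro a _ b _ h
    exact Fin.castSucc_injective n h
  · intro b hb
    simp only [mem_filter, mem_univ, true_and] at hb
    obtain ⟨a, rfl⟩ := Fin.exists_castSucc_eq.2 hb.1
    exact ⟨a, by simp [hb.2], rfl⟩

/-- Exact coverage of split conformal prediction: for exchangeable
nonconformity scores with a continuous joint distribution (ties have
probability zero), the conformal p-value
`δ = (1 + #{i ≤ n : R_i ≥ R_{n+1}})/(n+1)` satisfies
`P(δ > α) = 1 − ⌊α(n+1)⌋/(n+1)`. -/
theorem stmt4 {Ω : Type*} [MeasurableSpace Ω] (P : Measure Ω) [IsProbabilityMeasure P]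
    (n : ℕ) (R : Fin (n + 1) → Ω → ℝ) (hmeas : ∀ i, Measurable (R i))
    (hexch : ∀ σ : Equiv.Perm (Fin (n + 1)),
      P.map (fun ω i => R (σ i) ω) = P.map (fun ω i => R i ω))
    (hties : ∀ i j : Fin (n + 1), i ≠ j → P {ω | R i ω = R j ω} = 0)
    (α : ℝ) (hα : α ∈ Set.Ioo (0 : ℝ) 1) :
    P {ω | α < (1 + ((Finset.univ.filter
        (fun i : Fin n => R (Fin.last n) ω ≤ R i.castSucc ω)).card : ℝ)) / (n + 1)}
      = ENNReal.ofReal (1 - (⌊α * (n + 1)⌋ : ℝ) / (n + 1)) := by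
  classical
  obtain ⟨hα0, hα1⟩ := hα
  have hn1 : (0 : ℝ) < (n : ℝ) + 1 := by positivity
  -- floor facts
  have hfl0 : 0 ≤ ⌊α * (n + 1)⌋ := Int.floor_nonneg.2 (by positivity)
  have hfln : ⌊α * (n + 1)⌋ ≤ n := by
    have h : ⌊α * (n + 1)⌋ < (n : ℤ) + 1 := Int.floor_lt.2 (by push_cast; nlinarith)
    omega
  set m := (⌊α * (n + 1)⌋).toNat with hmdef
  have hmn : m ≤ n := by omega
  have hmz : (m : ℤ) = ⌊α * (n + 1)⌋ := Int.toNat_of_nonneg hfl0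
  have hmr : (m : ℝ) = (⌊α * (n + 1)⌋ : ℝ) := by exact_mod_cast hmz
  set A : ℕ → Set Ω := fun j => {ω | cnt' (Fin.last n) (fun i => R i ω) = j} with hAdef
  -- rewrite the event as a disjoint union over ranks
  have hset : {ω | α < (1 + ((Finset.univ.filter
        (fun i : Fin n => R (Fin.last n) ω ≤ R i.castSucc ω)).card : ℝ)) / (n + 1)}
      = ⋃ j ∈ Finset.Icc m n, A j := by
    ext ω
    simp only [Set.mem_setOf_eq, Set.mem_iUnion, Finset.mem_Icc, exists_prop, hAdef]
    rw [show (Finset.univ.filter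
        (fun i : Fin n => R (Fin.last n) ω ≤ R i.castSucc ω)).card
        = cnt' (Fin.last n) (fun i => R i ω) from cnt'_last (fun i => R i ω)]
    set c := cnt' (Fin.last n) (fun i => R i ω) with hc
    have hcn : c ≤ n := cnt'_le _ _
    constructor
    · intro h
      have h2 : α * ((n : ℝ) + 1) < 1 + c := (lt_div_iff₀ hn1).1 h
      have h3 : ⌊α * (n + 1)⌋ < (c : ℤ) + 1 := Int.floor_lt.2 (by push_cast; linarith)
      exact ⟨c, ⟨by omega, hcn⟩, rfl⟩
    · rintro ⟨j, ⟨hmj, hjn⟩, rfl⟩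
      rw [lt_div_iff₀ hn1]
      have h4 : α * ((n : ℝ) + 1) < (⌊α * (n + 1)⌋ : ℝ) + 1 := Int.lt_floor_add_one _
      have h5 : (m : ℝ) ≤ (c : ℝ) := by exact_mod_cast hmj
      rw [← hmr] at h4
      linarith
  -- measurability of the rank events
  have hAm : ∀ j : ℕ, MeasurableSet (A j) := fun j =>
    (measurable_cnt' (Fin.last n)).comp (measurable_pi_lambda _ hmeas) (measurableSet_singleton j)
  -- exchangeability: the law of the rank event is index-independent
  have hPeq : ∀ (t : Fin (n + 1)) (j : ℕ),
      P {ω | cnt' t (fun i => R i ω) = j} = P (A j) := by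
    intro t j
    set σ := Equiv.swap t (Fin.last n)
    have hFσ : Measurable (fun ω i => R (σ i) ω) := measurable_pi_lambda _ (fun i => hmeas (σ i))
    have hF : Measurable (fun ω (i : Fin (n + 1)) => R i ω) := measurable_pi_lambda _ hmeas
    have hS : MeasurableSet {v : Fin (n + 1) → ℝ | cnt' t v = j} :=
      measurable_cnt' t (measurableSet_singleton j)
    have h1 : A j = (fun ω i => R (σ i) ω) ⁻¹' {v | cnt' t v = j} := by
      ext ω
      simp only [hAdef, Set.mem_setOf_eq, Set.mem_preimage]
      rw [cnt'_comp_swap t (fun i => R i ω)]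
    rw [h1, ← Measure.map_apply hFσ hS, hexch σ, Measure.map_apply hF hS]
    rfl
  -- the distinct-values set has full measure
  set D : Set Ω := {ω | Function.Injective (fun i => R i ω)} with hD
  have hDc : P Dᶜ = 0 := by
    have hsub : Dᶜ ⊆ ⋃ i, ⋃ k, ⋃ (_ : i ≠ k), {ω | R i ω = R k ω} := by
      intro ω hω
      simp only [hD, Set.mem_compl_iff, Set.mem_setOf_eq, Function.Injective] at hω
      push_neg at hω
      obtain ⟨i, k, h1, h2⟩ := hω
      exact Set.mem_iUnion.2 ⟨i, Set.mem_iUnion.2 ⟨k, Set.mem_iUnion.2 ⟨h2, h1⟩⟩⟩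
    exact measure_mono_null hsub (measure_iUnion_null fun i => measure_iUnion_null fun k =>
      measure_iUnion_null fun h => hties i k h)
  have hDm : MeasurableSet D := by
    have hDeq : D = ⋂ i, ⋂ k, {ω | R i ω = R k ω → i = k} := by
      ext ω
      simp only [hD, Set.mem_setOf_eq, Set.mem_iInter, Function.Injective]
    rw [hDeq]
    refine MeasurableSet.iInter fun i => MeasurableSet.iInter fun k => ?_
    by_cases h : i = k
    · simp [h]
    · have : {ω | R i ω = R k ω → i = k} = {ω | R i ω = R k ω}ᶜ := by
        ext ω; simp [h]
      rw [this]
      exact (measurableSet_eq_fun (hmeas i) (hmeas k)).compl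
  -- uniformity of the rank of the last score
  have huniform : ∀ j : ℕ, j ≤ n → P (A j) = ((n : ℝ≥0∞) + 1)⁻¹ := by
    intro j hj
    set B : Fin (n + 1) → Set Ω := fun t => {ω | cnt' t (fun i => R i ω) = j} with hBdef
    have hBm : ∀ t, MeasurableSet (B t) := fun t =>
      (measurable_cnt' t).comp (measurable_pi_lambda _ hmeas) (measurableSet_singleton j)
    have hunion : (⋃ t ∈ Finset.univ, B t ∩ D) = D := by
      ext ω
      simp only [Set.mem_iUnion, Finset.mem_univ, Set.mem_inter_iff, hBdef, Set.mem_setOf_eq,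
        exists_prop, true_and]
      constructor
      · rintro ⟨t, _, h⟩; exact h
      · intro hω
        obtain ⟨t, ht, -⟩ := cnt'_existsUnique hω j hj
        exact ⟨t, ht, hω⟩
    have hdisj : (↑(Finset.univ : Finset (Fin (n + 1))) : Set (Fin (n + 1))).PairwiseDisjoint
        (fun t => B t ∩ D) := by
      intro s _ t _ hst
      refine Set.disjoint_left.2 fun ω hs ht => hst ?_
      exact cnt'_injective ht.2 (hs.1.trans ht.1.symm)
    have hsum : ∑ t : Fin (n + 1), P (B t ∩ D) = P D := by
      rw [← measure_biUnion_finset hdisj (fun t _ => (hBm t).inter hDm), hunion]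
    have hBD : ∀ t, P (B t ∩ D) = P (B t) := fun t => measure_inter_conull hDc
    have hPD : P D = 1 := (prob_compl_eq_zero_iff hDm).1 hDc
    have hkey : (n + 1 : ℝ≥0∞) * P (A j) = 1 := by
      calc (n + 1 : ℝ≥0∞) * P (A j)
          = ∑ _t : Fin (n + 1), P (A j) := by
            rw [Finset.sum_const, Finset.card_univ, Fintype.card_fin, nsmul_eq_mul]
            push_cast; ring
        _ = ∑ t : Fin (n + 1), P (B t) := Finset.sum_congr rfl fun t _ => (hPeq t j).symm
        _ = ∑ t : Fin (n + 1), P (B t ∩ D) := Finset.sum_congr rfl fun t _ => (hBD t).symm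
        _ = P D := hsum
        _ = 1 := hPD
    have hne : (n + 1 : ℝ≥0∞) ≠ 0 := by simp
    have hnetop : (n + 1 : ℝ≥0∞) ≠ ⊤ := by simp
    calc P (A j) = (n + 1 : ℝ≥0∞)⁻¹ * ((n + 1 : ℝ≥0∞) * P (A j)) := by
          rw [← mul_assoc, ENNReal.inv_mul_cancel hne hnetop, one_mul]
      _ = ((n : ℝ≥0∞) + 1)⁻¹ := by rw [hkey, mul_one]
  -- sum up over the union
  have hIdisj : (↑(Finset.Icc m n) : Set ℕ).PairwiseDisjoint A := by
    intro s _ t _ hst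
    refine Set.disjoint_left.2 fun ω hs ht => hst ?_
    rw [hAdef] at hs ht
    exact hs.symm.trans ht
  rw [hset, measure_biUnion_finset hIdisj (fun j _ => hAm j)]
  rw [Finset.sum_congr rfl (fun j hj => huniform j (Finset.mem_Icc.1 hj).2)]
  rw [Finset.sum_const, Nat.card_Icc, nsmul_eq_mul]
  -- final arithmetic
  have harith : (1 : ℝ) - (⌊α * (n + 1)⌋ : ℝ) / (n + 1) = ((n + 1 - m : ℕ) : ℝ) / ((n + 1 : ℕ) : ℝ) := by
    rw [← hmr]
    have h1 : ((n + 1 - m : ℕ) : ℝ) = (n : ℝ) + 1 - m := by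
      push_cast [Nat.cast_sub (by omega : m ≤ n + 1)]; ring
    rw [h1]
    field_simp
    push_cast; ring
  rw [harith, ENNReal.ofReal_div_of_pos (by positivity), ENNReal.ofReal_natCast,
    ENNReal.ofReal_natCast, div_eq_mul_inv]
  have hcast : ((n + 1 - m : ℕ) : ℝ≥0∞) = ((n - m + 1 : ℕ) : ℝ≥0∞) := by congr 1; omega
  have hcast2 : (((n + 1 : ℕ)) : ℝ≥0∞) = (n : ℝ≥0∞) + 1 := by push_cast; ring
  rw [hcast, hcast2]
end

section
/- Let α ∈ [b/(l+1), 1) with b dividing l+1, let N = (l+1)/b, let R_1,…,R_{N−1} be real numbers, and let k be the ⌈(l+1)(1−α)/b⌉-th smallest value among R_1,…,R_{N−1}. For a real number r define δ_r = (1 + |{i ∈ {1,…,N−1} : R_i ≥ r}|)/N. Then δ_r > α if and only if r ≤ k. -/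
lemma sorted_count_iff {s : List ℝ} (hs : s.Pairwise (· ≤ ·)) {j : ℕ} (hj : j < s.length) (r : ℝ) :
    r ≤ s.get ⟨j, hj⟩ ↔ s.length - j ≤ s.countP (fun x => decide (r ≤ x)) := by
  constructor
  · intro h
    have h1 : s.countP (fun x => decide (r ≤ x)) =
        (s.take j).countP (fun x => decide (r ≤ x)) + (s.drop j).countP (fun x => decide (r ≤ x)) := by
      conv_lhs => rw [← List.take_append_drop j s]
      rw [List.countP_append]
    have h2 : (s.drop j).countP (fun x => decide (r ≤ x)) = (s.drop j).length := by
      apply List.countP_eq_length.2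
      intro x hx
      obtain ⟨i, hi, rfl⟩ := List.getElem_of_mem hx
      rw [List.getElem_drop]
      simp only [decide_eq_true_eq]
      refine le_trans h ?_
      exact hs.rel_get_of_le (a := ⟨j, hj⟩) (b := ⟨j + i, by rw [List.length_drop] at hi; omega⟩) (by simp)
    rw [h1, h2, List.length_drop]
    omega
  · intro h
    by_contra hc
    push_neg at hc
    have h1 : s.countP (fun x => decide (r ≤ x)) =
        (s.take (j+1)).countP (fun x => decide (r ≤ x)) + (s.drop (j+1)).countP (fun x => decide (r ≤ x)) := by
      conv_lhs => rw [← List.take_append_drop (j+1) s]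
      rw [List.countP_append]
    have h2 : (s.take (j+1)).countP (fun x => decide (r ≤ x)) = 0 := by
      apply List.countP_eq_zero.2
      intro x hx
      obtain ⟨i, hi, rfl⟩ := List.getElem_of_mem hx
      rw [List.getElem_take]
      simp only [decide_eq_true_eq, not_le]
      rw [List.length_take] at hi
      refine lt_of_le_of_lt ?_ hc
      exact hs.rel_get_of_le (a := ⟨i, by omega⟩) (b := ⟨j, hj⟩) (by simp; omega)
    have h3 := List.countP_le_length (p := fun x => decide (r ≤ x)) (l := s.drop (j+1))
    rw [List.length_drop] at h3
    rw [h1, h2] at h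
    omega

lemma card_filter_univ_countP (n : ℕ) (p : Fin n → Prop) [DecidablePred p] :
    (Finset.univ.filter p).card = (List.finRange n).countP (fun i => decide (p i)) := by
  simp [Finset.filter, Fin.univ_def, Finset.card, List.countP_eq_length_filter]

lemma key_blocked (N : ℕ) (hN1 : 1 ≤ N) (α : ℝ) (hα0' : 1 / (N:ℝ) ≤ α) (hα1 : α < 1)
    (R : Fin (N - 1) → ℝ) (r : ℝ) :
    α < (1 + ((Finset.univ.filter (fun i : Fin (N - 1) => r ≤ R i)).card : ℝ)) / N
      ↔ r ≤ ((List.ofFn R).insertionSort (· ≤ ·)).getD ((⌈(N:ℝ) * (1 - α)⌉).toNat - 1) 0 := by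
  have hNR : (0:ℝ) < N := by exact_mod_cast hN1
  have hNα : 1 ≤ (N:ℝ) * α := by
    rw [div_le_iff₀ hNR] at hα0'; linarith
  have hN2 : 2 ≤ N := by
    by_contra h
    interval_cases N
    · simp at hNα; linarith
  set M : ℤ := ⌈(N:ℝ) * (1 - α)⌉ with hMceil
  set m : ℕ := M.toNat with hmdef
  have hM1 : 1 ≤ M := by
    rw [hMceil]
    have : (0:ℝ) < (N:ℝ) * (1 - α) := by
      apply mul_pos hNR; linarith
    exact Int.ceil_pos.2 this
  have hMN : M ≤ (N:ℤ) - 1 := by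
    rw [hMceil]
    apply Int.ceil_le.2
    push_cast
    nlinarith
  have hmM : (m : ℤ) = M := Int.toNat_of_nonneg (by omega)
  have hm1 : 1 ≤ m := by omega
  have hmN : m ≤ N - 1 := by omega
  set s : List ℝ := (List.ofFn R).insertionSort (· ≤ ·) with hsdef
  have hsorted : s.Pairwise (· ≤ ·) := List.pairwise_insertionSort _ _
  have hslen : s.length = N - 1 := by
    rw [hsdef, List.length_insertionSort, List.length_ofFn]
  have hj : m - 1 < s.length := by rw [hslen]; omega
  have hk : s.getD (m - 1) 0 = s.get ⟨m - 1, hj⟩ := by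
    rw [List.getD_eq_getElem s 0 hj]
    simp
  set c : ℕ := (Finset.univ.filter (fun i : Fin (N - 1) => r ≤ R i)).card with hc
  have hcount : s.countP (fun x => decide (r ≤ x)) = c := by
    rw [hsdef, (List.perm_insertionSort (· ≤ ·) (List.ofFn R)).countP_eq,
      List.ofFn_eq_map, List.countP_map, hc, card_filter_univ_countP]
    rfl
  rw [hk, sorted_count_iff hsorted hj r, hcount, hslen]
  have hsub : (N - 1) - (m - 1) = N - m := by omega
  rw [hsub]
  have hcastsub : ((N - m : ℕ) : ℝ) = (N:ℝ) - m := by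
    have : m ≤ N := by omega
    push_cast [this]; ring
  have hmMR : (m:ℝ) = (M:ℝ) := by exact_mod_cast hmM
  have hub : (M:ℝ) < (N:ℝ) * (1 - α) + 1 := by
    rw [hMceil]; exact Int.ceil_lt_add_one _
  have hlb : (N:ℝ) * (1 - α) ≤ (M:ℝ) := by rw [hMceil]; exact Int.le_ceil _
  rw [lt_div_iff₀ hNR]
  constructor
  · intro h
    have h1 : ((N - m : ℕ) : ℝ) < (c:ℝ) + 1 := by
      rw [hcastsub, hmMR]; nlinarith
    have h2 : (N - m : ℕ) < c + 1 := by exact_mod_cast h1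
    omega
  · intro h
    have h' : ((N - m : ℕ) : ℝ) ≤ c := by exact_mod_cast h
    rw [hcastsub, hmMR] at h'
    nlinarith

/-- Closed-form prediction band for the blocked split conformal procedure:
with `N = (l+1)/b` and `k` the `⌈(l+1)(1−α)/b⌉`-th smallest of the `N−1`
calibration block scores, the condition
`δ_r = (1 + #{i : R_i ≥ r})/N > α` holds iff `r ≤ k`. -/
theorem stmt6 (l b : ℕ) (hb : 1 ≤ b) (hdvd : b ∣ (l + 1)) (α : ℝ)
    (hα : α ∈ Set.Ico ((b : ℝ) / ((l : ℝ) + 1)) 1)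
    (R : Fin ((l + 1) / b - 1) → ℝ) (r : ℝ) :
    letI N : ℕ := (l + 1) / b
    letI m : ℕ := (⌈((l : ℝ) + 1) * (1 - α) / b⌉).toNat
    letI k : ℝ := ((List.ofFn R).insertionSort (· ≤ ·)).getD (m - 1) 0
    (α < (1 + ((Finset.univ.filter (fun i : Fin ((l + 1) / b - 1) => r ≤ R i)).card : ℝ)) / N
      ↔ r ≤ k) := by
  obtain ⟨hα0, hα1⟩ := hα
  have hbl : b ≤ l + 1 := Nat.le_of_dvd (Nat.succ_pos l) hdvd
  have hNb : ((l + 1) / b) * b = l + 1 := Nat.div_mul_cancel hdvd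
  have hbR : (0:ℝ) < b := by exact_mod_cast hb
  have hNbR : (((l + 1) / b : ℕ) : ℝ) * b = (l : ℝ) + 1 := by exact_mod_cast hNb
  have hN1 : 1 ≤ (l + 1) / b := Nat.one_le_div_iff hb |>.2 hbl
  have hNR : (0:ℝ) < (((l + 1) / b : ℕ) : ℝ) := by exact_mod_cast hN1
  have hα0' : 1 / (((l + 1) / b : ℕ) : ℝ) ≤ α := by
    have h : (b:ℝ) / ((l:ℝ) + 1) = 1 / (((l + 1) / b : ℕ) : ℝ) := by
      rw [← hNbR]; field_simp
    rwa [h] at hα0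
  have hmeq : ⌈((l : ℝ) + 1) * (1 - α) / b⌉ = ⌈(((l + 1) / b : ℕ) : ℝ) * (1 - α)⌉ := by
    congr 1
    rw [← hNbR]; field_simp
  show α < _ ↔ r ≤ ((List.ofFn R).insertionSort (· ≤ ·)).getD ((⌈((l : ℝ) + 1) * (1 - α) / b⌉).toNat - 1) 0
  rw [hmeq]
  exact key_blocked ((l + 1) / b) hN1 α hα0' hα1 R r
end

section
/- Let r_1,…,r_n, r*_1,…,r*_n, and r, r* be real numbers with (1/n)∑_i (r_i − r*_i)² ≤ δ² and |r − r*| ≤ δ. Let G̃(a) = (1/n)|{i : r_i ≥ a}| and G̃*(a) = (1/n)|{i : r*_i ≥ a}|. Then G̃(r) ≤ G̃*(r* − 2√δ) + δ and G̃(r) ≥ G̃*(r* + 2√δ) − δ. -/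
/-- Empirical one-sided distribution functions of perturbed versus oracle
scores: if `(1/n)∑(r_i − r*_i)² ≤ δ²` and `|r − r*| ≤ δ` (with `0 ≤ δ ≤ 1`),
then `G̃(r) ≤ G̃*(r* − 2√δ) + δ` and `G̃(r) ≥ G̃*(r* + 2√δ) − δ`. -/
theorem stmt11 (n : ℕ) (hn : 0 < n) (r rstar : Fin n → ℝ) (x xstar δ : ℝ)
    (hδ0 : 0 ≤ δ) (hδ1 : δ ≤ 1)
    (h2 : (1 / (n : ℝ)) * ∑ i, (r i - rstar i) ^ 2 ≤ δ ^ 2)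
    (h1 : |x - xstar| ≤ δ) :
    letI Gt : ℝ → ℝ := fun a => ((Finset.univ.filter (fun i : Fin n => a ≤ r i)).card : ℝ) / n
    letI Gs : ℝ → ℝ := fun a => ((Finset.univ.filter (fun i : Fin n => a ≤ rstar i)).card : ℝ) / n
    Gt x ≤ Gs (xstar - 2 * Real.sqrt δ) + δ ∧ Gs (xstar + 2 * Real.sqrt δ) - δ ≤ Gt x := by
  dsimp only
  have hn' : (0 : ℝ) < n := by exact_mod_cast hn
  set s := Real.sqrt δ with hs
  have hs0 : 0 ≤ s := Real.sqrt_nonneg δ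
  have hss : s * s = δ := Real.mul_self_sqrt hδ0
  have hs1 : s ≤ 1 := Real.sqrt_le_one.mpr hδ1
  have hδs : δ ≤ s := by nlinarith
  have hsum : ∑ i, (r i - rstar i) ^ 2 ≤ n * δ ^ 2 := by
    rw [one_div, inv_mul_le_iff₀ hn'] at h2
    linarith [h2]
  set B := Finset.univ.filter (fun i : Fin n => s < |r i - rstar i|) with hB
  have hBsum : δ * B.card ≤ ∑ i, (r i - rstar i) ^ 2 := by
    calc δ * B.card = ∑ _i ∈ B, δ := by rw [Finset.sum_const, nsmul_eq_mul, mul_comm]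
      _ ≤ ∑ i ∈ B, (r i - rstar i) ^ 2 := by
          apply Finset.sum_le_sum
          intro i hi
          have := (Finset.mem_filter.mp hi).2
          have h2 : s * s < |r i - rstar i| * |r i - rstar i| := by
            apply mul_lt_mul' (le_of_lt this) this hs0 (lt_of_le_of_lt hs0 this)
          rw [hss] at h2
          nlinarith [abs_nonneg (r i - rstar i), sq_abs (r i - rstar i)]
      _ ≤ ∑ i, (r i - rstar i) ^ 2 := by
          apply Finset.sum_le_sum_of_subset_of_nonneg (Finset.subset_univ B)
          intro i _ _; positivity
  have hBcard : (B.card : ℝ) ≤ n * δ := by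
    rcases eq_or_lt_of_le hδ0 with h0 | h0
    · have hall : ∀ i ∈ Finset.univ, (r i - rstar i) ^ 2 = 0 := by
        rw [← Finset.sum_eq_zero_iff_of_nonneg (fun i _ => sq_nonneg _)]
        have : ∑ i, (r i - rstar i) ^ 2 ≤ 0 := by rw [← h0] at hsum; simpa using hsum
        linarith [Finset.sum_nonneg (fun i (_ : i ∈ Finset.univ) => sq_nonneg (r i - rstar i))]
      have : B = ∅ := by
        apply Finset.eq_empty_of_forall_notMem
        intro i hi
        have h := (Finset.mem_filter.mp hi).2
        have := hall i (Finset.mem_univ i)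
        have hr : r i = rstar i := by nlinarith
        rw [hr] at h
        simp at h
        exact absurd h (not_lt.mpr hs0)
      rw [this]; simp; positivity
    · have : δ * B.card ≤ δ * (n * δ) := by nlinarith
      exact le_of_mul_le_mul_left this h0
  have hx1 : xstar - δ ≤ x := by
    have := abs_le.mp h1; linarith [this.1]
  have hx2 : x ≤ xstar + δ := by
    have := abs_le.mp h1; linarith [(abs_le.mp h1).2]
  constructor
  · -- Gt x ≤ Gs (xstar - 2s) + δ
    have hsub : Finset.univ.filter (fun i : Fin n => x ≤ r i) ⊆
        (Finset.univ.filter (fun i : Fin n => xstar - 2 * s ≤ rstar i)) ∪ B := by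
      intro i hi
      have hxi := (Finset.mem_filter.mp hi).2
      by_cases hib : i ∈ B
      · exact Finset.mem_union_right _ hib
      · apply Finset.mem_union_left
        rw [Finset.mem_filter]
        refine ⟨Finset.mem_univ i, ?_⟩
        have : ¬ s < |r i - rstar i| := by
          intro h; exact hib (Finset.mem_filter.mpr ⟨Finset.mem_univ i, h⟩)
        have habs := abs_le.mp (not_lt.mp this)
        linarith [habs.1, habs.2]
    have hcard : ((Finset.univ.filter (fun i : Fin n => x ≤ r i)).card : ℝ) ≤
        ((Finset.univ.filter (fun i : Fin n => xstar - 2 * s ≤ rstar i)).card : ℝ) + n * δ := by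
      have h1 := Finset.card_le_card hsub
      have h2 := Finset.card_union_le
        (Finset.univ.filter (fun i : Fin n => xstar - 2 * s ≤ rstar i)) B
      have : ((Finset.univ.filter (fun i : Fin n => x ≤ r i)).card : ℝ) ≤
          ((Finset.univ.filter (fun i : Fin n => xstar - 2 * s ≤ rstar i)).card : ℝ) + B.card := by
        exact_mod_cast le_trans h1 h2
      linarith
    show ((Finset.univ.filter (fun i : Fin n => x ≤ r i)).card : ℝ) / n ≤
        ((Finset.univ.filter (fun i : Fin n => xstar - 2 * s ≤ rstar i)).card : ℝ) / n + δ
    rw [div_add' _ _ _ (ne_of_gt hn'), div_le_div_iff_of_pos_right hn']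
    linarith
  · -- Gs (xstar + 2s) - δ ≤ Gt x
    have hsub : Finset.univ.filter (fun i : Fin n => xstar + 2 * s ≤ rstar i) ⊆
        (Finset.univ.filter (fun i : Fin n => x ≤ r i)) ∪ B := by
      intro i hi
      have hxi := (Finset.mem_filter.mp hi).2
      by_cases hib : i ∈ B
      · exact Finset.mem_union_right _ hib
      · apply Finset.mem_union_left
        rw [Finset.mem_filter]
        refine ⟨Finset.mem_univ i, ?_⟩
        have : ¬ s < |r i - rstar i| := by
          intro h; exact hib (Finset.mem_filter.mpr ⟨Finset.mem_univ i, h⟩)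
        have habs := abs_le.mp (not_lt.mp this)
        linarith [habs.1, habs.2]
    have hcard : ((Finset.univ.filter (fun i : Fin n => xstar + 2 * s ≤ rstar i)).card : ℝ) ≤
        ((Finset.univ.filter (fun i : Fin n => x ≤ r i)).card : ℝ) + n * δ := by
      have h1 := Finset.card_le_card hsub
      have h2 := Finset.card_union_le
        (Finset.univ.filter (fun i : Fin n => x ≤ r i)) B
      have : ((Finset.univ.filter (fun i : Fin n => xstar + 2 * s ≤ rstar i)).card : ℝ) ≤
          ((Finset.univ.filter (fun i : Fin n => x ≤ r i)).card : ℝ) + B.card := by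
        exact_mod_cast le_trans h1 h2
      linarith
    show ((Finset.univ.filter (fun i : Fin n => xstar + 2 * s ≤ rstar i)).card : ℝ) / n - δ ≤
        ((Finset.univ.filter (fun i : Fin n => x ≤ r i)).card : ℝ) / n
    rw [sub_le_iff_le_add, div_add' _ _ _ (ne_of_gt hn'), div_le_div_iff_of_pos_right hn']
    linarith
end
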